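/- Let s, t : Fin M → ℝ with M ≥ 1. Then the minimum over all permutations σ of Fin M of the matching cost ∑_{i} |s(i) − t(σ(i))| equals ∫_ℝ |F(y)| dy; that is, the cost of a minimal bipartite matching on the line can be computed without producing a matching, as the integral of |F|. -/

import Mathlib

open Finset MeasureTheory

noncomputable def stepf (a b y : ℝ) : ℝ :=
  (if a < y then 1 else 0) - (if b < y then 1 else 0)

lemma stepf_eq_indicator (a b : ℝ) :
    stepf a b = Set.indicator (Set.Ioc (min a b) (max a b))
      (fun _ => if a ≤ b then (1:ℝ) else -1) := by
  funext y
  rcases le_total a b with hab | hab <;>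
    by_cases h1 : a < y <;> by_cases h2 : b < y <;>
      simp [stepf, Set.indicator, Set.mem_Ioc, h1, h2, hab,
        min_eq_left, min_eq_right, max_eq_left, max_eq_right] <;>
      (try split_ifs) <;> first | rfl | linarith

lemma integrable_stepf (a b : ℝ) : Integrable (stepf a b) := by
  rw [stepf_eq_indicator]
  rw [integrable_indicator_iff measurableSet_Ioc]
  exact integrableOn_const measure_Ioc_lt_top.ne

lemma abs_stepf (a b y : ℝ) :
    |stepf a b y| = Set.indicator (Set.Ioc (min a b) (max a b)) (fun _ => (1:ℝ)) y := by
  rw [stepf_eq_indicator]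
  simp [Set.indicator, apply_ite abs]

lemma integral_abs_stepf (a b : ℝ) : ∫ y, |stepf a b y| = |a - b| := by
  simp only [abs_stepf]
  rw [MeasureTheory.integral_indicator_const _ measurableSet_Ioc]
  simp [Real.volume_Ioc, ENNReal.toReal_ofReal (sub_nonneg.2 (min_le_max (a := a) (b := b))),
    max_sub_min_eq_abs, abs_sub_comm]

lemma integrable_abs_stepf (a b : ℝ) : Integrable (fun y => |stepf a b y|) :=
  (integrable_stepf a b).abs

lemma abs_sum_stepf {M : ℕ} {a b : Fin M → ℝ} (ha : Monotone a) (hb : Monotone b) (y : ℝ) :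
    |∑ i, stepf (a i) (b i) y| = ∑ i, |stepf (a i) (b i) y| := by
  have key : (∀ i, 0 ≤ stepf (a i) (b i) y) ∨ (∀ i, stepf (a i) (b i) y ≤ 0) := by
    by_contra h
    push_neg at h
    obtain ⟨⟨i, hi⟩, ⟨j, hj⟩⟩ := h
    unfold stepf at hi hj
    split_ifs at hi hj with h1 h2 h3 h4 <;> (try push_neg at *) <;>
      try linarith
    -- remaining case: hi : y ≤ a i, b i < y ; hj : a j < y, y ≤ b j
    rcases le_total i j with hij | hij
    · exact absurd (ha hij) (by linarith)
    · exact absurd (hb hij) (by linarith)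
  rcases key with hk | hk
  · rw [abs_of_nonneg (Finset.sum_nonneg fun i _ => hk i)]
    exact Finset.sum_congr rfl fun i _ => (abs_of_nonneg (hk i)).symm
  · rw [abs_of_nonpos (Finset.sum_nonpos fun i _ => hk i), ← Finset.sum_neg_distrib]
    exact Finset.sum_congr rfl fun i _ => (abs_of_nonpos (hk i)).symm

/-- The minimal bipartite matching cost on the line equals the integral over `ℝ` of
`|F|`, where `F(y) = #{i | s i < y} - #{i | t i < y}`. -/
theorem min_matching_cost_eq_integral (M : ℕ) (hM : 1 ≤ M) (s t : Fin M → ℝ) :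
    (⨅ σ : Equiv.Perm (Fin M), ∑ i, |s i - t (σ i)|) =
      ∫ y : ℝ, |(((univ.filter fun i => s i < y).card : ℤ)
        - ((univ.filter fun i => t i < y).card : ℤ) : ℝ)| := by
  classical
  set G : ℝ → ℝ := fun y => ∑ i, stepf (s i) (t i) y with hG
  have hFeq : ∀ y : ℝ,
      |(((univ.filter fun i => s i < y).card : ℤ)
        - ((univ.filter fun i => t i < y).card : ℤ) : ℝ)| = |G y| := by
    intro y
    congr 1
    simp only [hG, stepf, Finset.sum_sub_distrib, Finset.sum_boole]
    push_cast
    ring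
  have hGint : Integrable G := integrable_finset_sum _ fun i _ => integrable_stepf _ _
  -- reindexing: for any σ, G y = ∑ i, stepf (s i) (t (σ i)) y
  have hGσ : ∀ (σ : Equiv.Perm (Fin M)) (y : ℝ),
      G y = ∑ i, stepf (s i) (t (σ i)) y := by
    intro σ y
    simp only [hG, stepf, Finset.sum_sub_distrib]
    congr 1
    exact (Equiv.sum_comp σ fun i => if t i < y then (1:ℝ) else 0).symm
  -- lower bound
  have hlow : ∀ σ : Equiv.Perm (Fin M), (∫ y, |G y|) ≤ ∑ i, |s i - t (σ i)| := by
    intro σ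
    have h1 : (∫ y, |G y|) ≤ ∫ y, ∑ i, |stepf (s i) (t (σ i)) y| := by
      apply integral_mono hGint.abs
        (integrable_finset_sum _ fun i _ => integrable_abs_stepf _ _)
      intro y
      dsimp only
      rw [hGσ σ y]
      exact Finset.abs_sum_le_sum_abs _ _
    calc (∫ y, |G y|) ≤ ∫ y, ∑ i, |stepf (s i) (t (σ i)) y| := h1
      _ = ∑ i, ∫ y, |stepf (s i) (t (σ i)) y| :=
          integral_finset_sum _ fun i _ => integrable_abs_stepf _ _
      _ = ∑ i, |s i - t (σ i)| := by
          exact Finset.sum_congr rfl fun i _ => integral_abs_stepf _ _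
  -- optimal permutation
  set πs := Tuple.sort s with hπs
  set πt := Tuple.sort t with hπt
  set a : Fin M → ℝ := s ∘ πs with haa
  set b : Fin M → ℝ := t ∘ πt with hbb
  have hma : Monotone a := Tuple.monotone_sort s
  have hmb : Monotone b := Tuple.monotone_sort t
  set σ₀ : Equiv.Perm (Fin M) := πs.symm.trans πt with hσ₀
  have hGab : ∀ y, G y = ∑ j, stepf (a j) (b j) y := by
    intro y
    simp only [hG, stepf, Finset.sum_sub_distrib, haa, hbb, Function.comp]
    congr 1
    · exact (Equiv.sum_comp πs fun i => if s i < y then (1:ℝ) else 0).symm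
    · exact (Equiv.sum_comp πt fun i => if t i < y then (1:ℝ) else 0).symm
  have hcost :  ∑ i, |s i - t (σ₀ i)| = ∑ j, |a j - b j| := by
    have : ∀ i, s i = a (πs.symm i) := by
      intro i; simp [haa]
    calc ∑ i, |s i - t (σ₀ i)| = ∑ i, |a (πs.symm i) - b (πs.symm i)| := by
          apply Finset.sum_congr rfl
          intro i _
          simp [haa, hbb, hσ₀]
      _ = ∑ j, |a j - b j| := Equiv.sum_comp πs.symm fun j => |a j - b j|
  have heq : (∫ y, |G y|) = ∑ i, |s i - t (σ₀ i)| := by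
    rw [hcost]
    calc (∫ y, |G y|) = ∫ y, ∑ j, |stepf (a j) (b j) y| := by
          apply integral_congr_ae
          filter_upwards with y
          rw [hGab y, abs_sum_stepf hma hmb]
      _ = ∑ j, ∫ y, |stepf (a j) (b j) y| :=
          integral_finset_sum _ fun j _ => integrable_abs_stepf _ _
      _ = ∑ j, |a j - b j| := Finset.sum_congr rfl fun j _ => integral_abs_stepf _ _
  have hint_eq : (∫ y : ℝ, |(((univ.filter fun i => s i < y).card : ℤ)
        - ((univ.filter fun i => t i < y).card : ℤ) : ℝ)|) = ∫ y, |G y| := by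
    exact integral_congr_ae (by filter_upwards with y using hFeq y)
  rw [hint_eq]
  apply le_antisymm
  · calc (⨅ σ : Equiv.Perm (Fin M), ∑ i, |s i - t (σ i)|)
        ≤ ∑ i, |s i - t (σ₀ i)| := ciInf_le (Set.Finite.bddBelow (Set.finite_range _)) σ₀
      _ = ∫ y, |G y| := heq.symm
  · exact le_ciInf hlow
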